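/- Let {β_i = U e_i} be any orthonormal basis of ℂ^N obtained by a unitary U. Projecting the first factor of |S_N⟩ onto β_i yields (up to phase and normalization) β_i ⊗ |S_{N−1}(β; β_i)⟩, where |S_{N−1}(β; β_i)⟩ is the (N−1)-singlet built from the basis vectors {β_l : l ≠ i}. In particular each outcome has probability 1/N and the post-measurement state of the unmeasured parties is a singlet regardless of the choice of U. -/

import Mathlib

/-- The `N`-level singlet `(1/√N!) Σ_{σ∈S_N} sgn(σ) e_{σ(1)} ⊗ ⋯ ⊗ e_{σ(N)}`. -/
noncomputable def singlet (N : ℕ) : EuclideanSpace ℂ (Fin N → Fin N) :=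
  ((Real.sqrt N.factorial : ℂ))⁻¹ • ∑ σ : Equiv.Perm (Fin N),
    ((Equiv.Perm.sign σ : ℤ) : ℂ) • EuclideanSpace.single (⇑σ) (1 : ℂ)

/-- The order-preserving enumeration of `{1,…,N} ∖ {i}` by `Fin (N-1)`. -/
noncomputable def missing {N : ℕ} (i : Fin N) : Fin (N - 1) → Fin N :=
  fun j => (Finset.univ.erase i).orderEmbOfFin
    (by simp [Finset.card_erase_of_mem]) j

/-- The `(N−1)`-party singlet `|S_{N−1}(β; β_i)⟩` built from the basis vectors
`{β_l : l ≠ i}`, where `β_l` is the `l`-th column of the matrix `U`: the normalized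
antisymmetrization `(1/√(N−1)!) Σ_τ sgn(τ) β_{m(τ 1)} ⊗ ⋯ ⊗ β_{m(τ (N−1))}`, with
`m` enumerating `{1,…,N} ∖ {i}`. -/
noncomputable def subSingletOfBasis {N : ℕ} (U : Matrix (Fin N) (Fin N) ℂ)
    (i : Fin N) : EuclideanSpace ℂ (Fin (N - 1) → Fin N) :=
  ((Real.sqrt (N - 1).factorial : ℂ))⁻¹ • ∑ τ : Equiv.Perm (Fin (N - 1)),
    ((Equiv.Perm.sign τ : ℤ) : ℂ) •
      (WithLp.toLp 2 (fun g : Fin (N - 1) → Fin N => ∏ j, U (g j) (missing i (τ j))) :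
        EuclideanSpace ℂ (Fin (N - 1) → Fin N))

/-- The product state `β ⊗ χ` in `(ℂ^N)^{⊗N}`, with the vector `β` on the first
factor and `χ` on the remaining factors. -/
noncomputable def prodStateVec {N : ℕ} (hN : 0 < N) (β : EuclideanSpace ℂ (Fin N))
    (χ : EuclideanSpace ℂ (Fin (N - 1) → Fin N)) :
    EuclideanSpace ℂ (Fin N → Fin N) :=
  WithLp.toLp 2 (fun f => β (f ⟨0, hN⟩) * χ (fun j => f ⟨j.1 + 1, by have := j.2; omega⟩))

/-- The projection `|β⟩⟨β| ⊗ I^{⊗(N−1)}` applied to `ψ`. -/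
noncomputable def projFirstVec {d N : ℕ} (hN : 0 < N) (β : EuclideanSpace ℂ (Fin d))
    (ψ : EuclideanSpace ℂ (Fin N → Fin d)) : EuclideanSpace ℂ (Fin N → Fin d) :=
  WithLp.toLp 2 (fun f => β (f ⟨0, hN⟩) *
    ∑ a : Fin d, (starRingEnd ℂ) (β a) * ψ (Function.update f ⟨0, hN⟩ a))

open Matrix

section Aux

lemma esmul_apply {ι : Type*} (c : ℂ) (v : EuclideanSpace ℂ ι) (x : ι) :
    (c • v) x = c * v x := rfl

lemma esum_apply {ι κ : Type*} [Fintype κ] (F : κ → EuclideanSpace ℂ ι) (x : ι) :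
    (∑ a : κ, F a) x = ∑ a : κ, F a x := by rw [WithLp.ofLp_sum]; exact Finset.sum_apply x Finset.univ _

lemma missing_eq_succAbove {n : ℕ} (i : Fin (n+1)) :
    missing (N := n+1) i = Fin.succAbove i := by
  unfold missing
  exact (Finset.orderEmbOfFin_unique _
    (fun x => by simp [Fin.succAbove_ne]) (Fin.strictMono_succAbove i)).symm

lemma col_orth {N : ℕ} {U : Matrix (Fin N) (Fin N) ℂ}
    (hU : U ∈ Matrix.unitaryGroup (Fin N) ℂ) (a b : Fin N) :
    ∑ x, (starRingEnd ℂ) (U x a) * U x b = if a = b then 1 else 0 := by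
  have h1 : star U * U = 1 := hU.1
  have := congrFun (congrFun h1 a) b
  simpa [Matrix.mul_apply, Matrix.one_apply, Matrix.star_apply] using this

lemma detU_ne_zero {N : ℕ} {U : Matrix (Fin N) (Fin N) ℂ}
    (hU : U ∈ Matrix.unitaryGroup (Fin N) ℂ) : U.det ≠ 0 := by
  have h := Matrix.det_of_mem_unitary hU
  intro h0
  have := h.1
  rw [h0] at this; simp at this

lemma norm_detU {N : ℕ} {U : Matrix (Fin N) (Fin N) ℂ}
    (hU : U ∈ Matrix.unitaryGroup (Fin N) ℂ) : ‖U.det‖ = 1 := by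
  have h2 : (starRingEnd ℂ) U.det * U.det = 1 := (Matrix.det_of_mem_unitary hU).1
  have h3 : ‖U.det‖ * ‖U.det‖ = 1 := by
    have := congrArg norm h2
    rwa [norm_mul, RCLike.norm_conj, norm_one] at this
  rcases mul_self_eq_one_iff.mp h3 with h | h
  · exact h
  · have := norm_nonneg U.det
    linarith

/-- Matrix with column 0 equal to `conj (U · i)` and column `j.succ` the indicator of `h j`. -/
noncomputable def Qm {n : ℕ} (U : Matrix (Fin (n+1)) (Fin (n+1)) ℂ) (i : Fin (n+1))
    (h : Fin n → Fin (n+1)) : Matrix (Fin (n+1)) (Fin (n+1)) ℂ :=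
  Matrix.of fun x => Fin.cons ((starRingEnd ℂ) (U x i)) (fun j => if x = h j then (1:ℂ) else 0)

/-- The submatrix of `U` with rows `h 0, …, h (n-1)` and columns omitting `i` (transposed). -/
noncomputable def Rm {n : ℕ} (U : Matrix (Fin (n+1)) (Fin (n+1)) ℂ) (i : Fin (n+1))
    (h : Fin n → Fin (n+1)) : Matrix (Fin n) (Fin n) ℂ :=
  Matrix.of fun a j => U (h j) (Fin.succAbove i a)

lemma det_Qm {n : ℕ} {U : Matrix (Fin (n+1)) (Fin (n+1)) ℂ}
    (hU : U ∈ Matrix.unitaryGroup (Fin (n+1)) ℂ) (i : Fin (n+1))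
    (h : Fin n → Fin (n+1)) :
    (Qm U i h).det = (U.det)⁻¹ * (-1)^(i:ℕ) * (Rm U i h).det := by
  have hP : (Qm U i h)ᵀ * U =
      Matrix.of (Fin.cons (fun k => if i = k then (1:ℂ) else 0) (fun j k => U (h j) k)) := by
    ext r k
    refine Fin.cases ?_ ?_ r
    · simpa [Matrix.mul_apply, Qm, Matrix.transpose_apply] using col_orth hU i k
    · intro j
      simp [Matrix.mul_apply, Qm, Matrix.transpose_apply, ite_mul]
  have hdet1 : (Qm U i h).det * U.det = (-1)^(i:ℕ) * (Rm U i h).det := by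
    have h1 : (Qm U i h).det * U.det = ((Qm U i h)ᵀ * U).det := by
      rw [Matrix.det_mul, Matrix.det_transpose]
    rw [h1, hP, Matrix.det_succ_row_zero]
    rw [Finset.sum_eq_single i]
    · have : (Matrix.of (Fin.cons (fun k => if i = k then (1:ℂ) else 0)
          (fun j k => U (h j) k))).submatrix Fin.succ i.succAbove = (Rm U i h)ᵀ := by
        ext j k
        simp [Matrix.submatrix_apply, Rm, Matrix.transpose_apply]
      rw [this]
      simp
    · intro b _ hb
      simp [Ne.symm hb]
    · simp
  have hdU := detU_ne_zero hU
  field_simp at hdet1 ⊢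
  linear_combination hdet1

lemma singlet_apply (N : ℕ) (g : Fin N → Fin N) :
    singlet N g = ((Real.sqrt N.factorial : ℂ))⁻¹ * ∑ σ : Equiv.Perm (Fin N),
      ((Equiv.Perm.sign σ : ℤ) : ℂ) * (if g = ⇑σ then 1 else 0) := by
  unfold singlet
  rw [esmul_apply, esum_apply]
  congr 1
  refine Finset.sum_congr rfl fun σ _ => ?_
  rw [esmul_apply, EuclideanSpace.single_apply]

lemma det_Qm_expand {n : ℕ} (U : Matrix (Fin (n+1)) (Fin (n+1)) ℂ) (i : Fin (n+1))
    (h : Fin n → Fin (n+1)) :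
    (Qm U i h).det = ∑ σ : Equiv.Perm (Fin (n+1)), ((Equiv.Perm.sign σ : ℤ) : ℂ) *
      ((starRingEnd ℂ) (U (σ 0) i) * ∏ j, if σ j.succ = h j then (1:ℂ) else 0) := by
  rw [Matrix.det_apply']
  refine Finset.sum_congr rfl fun σ _ => ?_
  congr 1
  rw [Fin.prod_univ_succ]
  simp [Qm]

lemma det_Rm_expand {n : ℕ} (U : Matrix (Fin (n+1)) (Fin (n+1)) ℂ) (i : Fin (n+1))
    (h : Fin n → Fin (n+1)) :
    (Rm U i h).det = ∑ τ : Equiv.Perm (Fin n), ((Equiv.Perm.sign τ : ℤ) : ℂ) *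
      ∏ j, U (h j) (Fin.succAbove i (τ j)) := by
  rw [Matrix.det_apply']
  rfl

lemma innerSumIndicator {n : ℕ} (U : Matrix (Fin (n+1)) (Fin (n+1)) ℂ) (i : Fin (n+1))
    (f : Fin (n+1) → Fin (n+1)) (σ : Equiv.Perm (Fin (n+1))) :
    ∑ a, (starRingEnd ℂ) (U a i) * (if Function.update f 0 a = ⇑σ then 1 else 0)
      = (starRingEnd ℂ) (U (σ 0) i) *
        ∏ j : Fin n, if σ j.succ = f j.succ then (1:ℂ) else 0 := by
  have hiff : ∀ a, (Function.update f 0 a = ⇑σ) ↔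
      (a = σ 0 ∧ ∀ j : Fin n, σ j.succ = f j.succ) := by
    intro a
    rw [funext_iff, Fin.forall_fin_succ]
    constructor
    · rintro ⟨h1, h2⟩
      exact ⟨by simpa using h1, fun j => by simpa [Fin.succ_ne_zero] using (h2 j).symm⟩
    · rintro ⟨h1, h2⟩
      refine ⟨by simpa using h1, fun j => ?_⟩
      simpa [Fin.succ_ne_zero] using (h2 j).symm
  rw [Finset.prod_boole]
  by_cases hQ : ∀ j : Fin n, σ j.succ = f j.succ
  · rw [if_pos (fun j _ => hQ j), mul_one]
    rw [Finset.sum_eq_single (σ 0)]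
    · simp [hiff, hQ]
    · intro b _ hb
      simp [hiff, hb]
    · simp
  · rw [if_neg (fun hc => hQ fun j => hc j (Finset.mem_univ j)), mul_zero]
    refine Finset.sum_eq_zero fun a _ => ?_
    simp [hiff, hQ]

lemma proj_apply {n : ℕ} (hN : 0 < n+1) (U : Matrix (Fin (n+1)) (Fin (n+1)) ℂ)
    (i : Fin (n+1)) (f : Fin (n+1) → Fin (n+1)) :
    projFirstVec hN (WithLp.toLp 2 (fun x => U x i)) (singlet (n+1)) f
      = ((Real.sqrt (n+1).factorial : ℂ))⁻¹ *
        (U (f 0) i * (Qm U i (fun j => f j.succ)).det) := by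
  show (U (f 0) i) * ∑ a, (starRingEnd ℂ) (U a i) * singlet (n+1) (Function.update f 0 a) = _
  rw [det_Qm_expand]
  have step1 : ∀ a, (starRingEnd ℂ) (U a i) * singlet (n+1) (Function.update f 0 a)
      = ((Real.sqrt (n+1).factorial : ℂ))⁻¹ * ∑ σ : Equiv.Perm (Fin (n+1)),
          ((Equiv.Perm.sign σ : ℤ) : ℂ) *
            ((starRingEnd ℂ) (U a i) * (if Function.update f 0 a = ⇑σ then 1 else 0)) := by
    intro a
    rw [singlet_apply, mul_left_comm]
    congr 1
    rw [Finset.mul_sum]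
    exact Finset.sum_congr rfl fun σ _ => by ring
  have hsum : ∑ a, (starRingEnd ℂ) (U a i) * singlet (n+1) (Function.update f 0 a)
      = ((Real.sqrt (n+1).factorial : ℂ))⁻¹ * ∑ σ : Equiv.Perm (Fin (n+1)),
          ((Equiv.Perm.sign σ : ℤ) : ℂ) * ((starRingEnd ℂ) (U (σ 0) i) *
            ∏ j : Fin n, if σ j.succ = f j.succ then (1:ℂ) else 0) := by
    rw [Finset.sum_congr rfl fun a _ => step1 a, ← Finset.mul_sum]
    congr 1
    rw [Finset.sum_comm]
    refine Finset.sum_congr rfl fun σ _ => ?_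
    rw [← Finset.mul_sum, innerSumIndicator U i f σ]
  rw [hsum]
  ring

lemma subSingletOfBasis_apply {n : ℕ} (U : Matrix (Fin (n+1)) (Fin (n+1)) ℂ) (i : Fin (n+1))
    (h : Fin n → Fin (n+1)) :
    subSingletOfBasis U i h = ((Real.sqrt n.factorial : ℂ))⁻¹ * (Rm U i h).det := by
  rw [det_Rm_expand]
  unfold subSingletOfBasis
  rw [esmul_apply, esum_apply]
  refine congrArg₂ (· * ·) rfl (Finset.sum_congr rfl fun τ _ => ?_)
  rw [esmul_apply]
  simp only [missing_eq_succAbove]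
  rfl

end Aux

section Norms

lemma norm_sq_complex (z : ℂ) : ‖z‖^2 = ((starRingEnd ℂ) z * z).re := by
  rw [mul_comm, Complex.mul_conj, Complex.ofReal_re, ← Complex.sq_norm]

lemma sum_norm_col {N : ℕ} {U : Matrix (Fin N) (Fin N) ℂ}
    (hU : U ∈ Matrix.unitaryGroup (Fin N) ℂ) (i : Fin N) :
    ∑ x : Fin N, ‖U x i‖^2 = 1 := by
  have h := col_orth hU i i
  rw [if_pos rfl] at h
  calc ∑ x : Fin N, ‖U x i‖^2
      = ∑ x : Fin N, ((starRingEnd ℂ) (U x i) * U x i).re :=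
        Finset.sum_congr rfl fun x _ => norm_sq_complex _
    _ = (∑ x : Fin N, (starRingEnd ℂ) (U x i) * U x i).re := (Complex.re_sum _ _).symm
    _ = 1 := by rw [h]; rfl

lemma conj_det_Rm {n : ℕ} (U : Matrix (Fin (n+1)) (Fin (n+1)) ℂ) (i : Fin (n+1))
    (h : Fin n → Fin (n+1)) :
    (starRingEnd ℂ) ((Rm U i h).det) = ∑ τ : Equiv.Perm (Fin n),
      ((Equiv.Perm.sign τ : ℤ) : ℂ) *
        ∏ j, (starRingEnd ℂ) (U (h j) (Fin.succAbove i (τ j))) := by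
  rw [det_Rm_expand, map_sum]
  refine Finset.sum_congr rfl fun τ _ => ?_
  rw [_root_.map_mul, map_prod]
  congr 1
  simp

lemma sum_det_sq {n : ℕ} {U : Matrix (Fin (n+1)) (Fin (n+1)) ℂ}
    (hU : U ∈ Matrix.unitaryGroup (Fin (n+1)) ℂ) (i : Fin (n+1)) :
    ∑ h : Fin n → Fin (n+1),
      (starRingEnd ℂ) ((Rm U i h).det) * (Rm U i h).det = (n.factorial : ℂ) := by
  have expand : ∀ h : Fin n → Fin (n+1),
      (starRingEnd ℂ) ((Rm U i h).det) * (Rm U i h).det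
        = ∑ τ' : Equiv.Perm (Fin n), ∑ τ : Equiv.Perm (Fin n),
            (((Equiv.Perm.sign τ' : ℤ) : ℂ) * ((Equiv.Perm.sign τ : ℤ) : ℂ)) *
              ∏ j, ((starRingEnd ℂ) (U (h j) (Fin.succAbove i (τ' j))) *
                U (h j) (Fin.succAbove i (τ j))) := by
    intro h
    rw [conj_det_Rm, det_Rm_expand, Finset.sum_mul_sum]
    refine Finset.sum_congr rfl fun τ' _ => Finset.sum_congr rfl fun τ _ => ?_
    rw [Finset.prod_mul_distrib]
    ring
  rw [Finset.sum_congr rfl fun h _ => expand h, Finset.sum_comm]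
  have hinner2 : ∀ τ' τ : Equiv.Perm (Fin n),
      (∑ h : Fin n → Fin (n+1),
        ∏ j, ((starRingEnd ℂ) (U (h j) (Fin.succAbove i (τ' j))) *
          U (h j) (Fin.succAbove i (τ j)))) = if τ = τ' then 1 else 0 := by
    intro τ' τ
    have hpf := Finset.sum_prod_piFinset (Finset.univ : Finset (Fin (n+1)))
      (fun j x => (starRingEnd ℂ) (U x (Fin.succAbove i (τ' j))) * U x (Fin.succAbove i (τ j)))
    rw [← Fintype.piFinset_univ, hpf]
    have horth : ∀ j : Fin n, (∑ x : Fin (n+1),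
        (starRingEnd ℂ) (U x (Fin.succAbove i (τ' j))) * U x (Fin.succAbove i (τ j)))
          = if τ j = τ' j then 1 else 0 := by
      intro j
      rw [col_orth hU]
      congr 1
      rw [Fin.succAbove_right_inj]
      exact propext eq_comm
    rw [Finset.prod_congr rfl fun j _ => horth j, Finset.prod_boole]
    congr 1
    simp only [Finset.mem_univ, forall_true_left, true_implies]
    exact propext (Equiv.ext_iff (f := τ) (g := τ')).symm
  have inner : ∀ τ' : Equiv.Perm (Fin n),
      (∑ h : Fin n → Fin (n+1), ∑ τ : Equiv.Perm (Fin n),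
        (((Equiv.Perm.sign τ' : ℤ) : ℂ) * ((Equiv.Perm.sign τ : ℤ) : ℂ)) *
              ∏ j, ((starRingEnd ℂ) (U (h j) (Fin.succAbove i (τ' j))) *
                U (h j) (Fin.succAbove i (τ j)))) = 1 := by
    intro τ'
    rw [Finset.sum_comm]
    rw [Finset.sum_congr rfl fun τ _ => (Finset.mul_sum _ _ _).symm]
    rw [Finset.sum_congr rfl fun τ _ => by rw [hinner2 τ' τ]]
    rw [Finset.sum_eq_single τ']
    · rw [if_pos rfl, mul_one, ← Int.cast_mul, ← Units.val_mul, Int.units_mul_self]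
      norm_num
    · intro b _ hb
      rw [if_neg hb, mul_zero]
    · simp
  rw [Finset.sum_congr rfl fun τ' _ => inner τ']
  simp [Finset.card_univ, Fintype.card_perm, Fintype.card_fin]

lemma sum_norm_det {n : ℕ} {U : Matrix (Fin (n+1)) (Fin (n+1)) ℂ}
    (hU : U ∈ Matrix.unitaryGroup (Fin (n+1)) ℂ) (i : Fin (n+1)) :
    ∑ h : Fin n → Fin (n+1), ‖(Rm U i h).det‖^2 = (n.factorial : ℝ) := by
  calc ∑ h : Fin n → Fin (n+1), ‖(Rm U i h).det‖^2
      = ∑ h : Fin n → Fin (n+1), ((starRingEnd ℂ) ((Rm U i h).det) * (Rm U i h).det).re :=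
        Finset.sum_congr rfl fun h _ => norm_sq_complex _
    _ = (∑ h : Fin n → Fin (n+1), (starRingEnd ℂ) ((Rm U i h).det) * (Rm U i h).det).re :=
        (Complex.re_sum _ _).symm
    _ = (n.factorial : ℝ) := by rw [sum_det_sq hU i]; simp

end Norms

/-- For any orthonormal basis `{β_i = U e_i}` given by a unitary `U`,
projecting the first factor of `|S_N⟩` onto `β_i` yields, up to a phase and
normalization, `β_i ⊗ |S_{N−1}(β; β_i)⟩`; each outcome has probability `1/N`,
regardless of the choice of `U`. -/
theorem singlet_projection_arbitrary_basis {N : ℕ} (hN : 0 < N)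
    (U : Matrix (Fin N) (Fin N) ℂ) (hU : U ∈ Matrix.unitaryGroup (Fin N) ℂ)
    (i : Fin N) :
    (∃ c : ℂ, ‖c‖ = (Real.sqrt N)⁻¹ ∧
      projFirstVec hN (WithLp.toLp 2 (fun x => U x i)) (singlet N) =
        c • prodStateVec hN (WithLp.toLp 2 (fun x => U x i)) (subSingletOfBasis U i)) ∧
    ‖projFirstVec hN (WithLp.toLp 2 (fun x => U x i)) (singlet N)‖ ^ 2 = (N : ℝ)⁻¹ := by
  obtain ⟨n, rfl⟩ : ∃ n, N = n + 1 := ⟨N - 1, (Nat.succ_pred_eq_of_pos hN).symm⟩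
  have hfn : (0:ℝ) < Real.sqrt n.factorial :=
    Real.sqrt_pos.mpr (by exact_mod_cast n.factorial_pos)
  have hfn1 : (0:ℝ) < Real.sqrt (n+1).factorial :=
    Real.sqrt_pos.mpr (by exact_mod_cast (n+1).factorial_pos)
  set c : ℂ := ((Real.sqrt n.factorial : ℝ) : ℂ) *
      ((Real.sqrt (n+1).factorial : ℝ) : ℂ)⁻¹ * ((U.det)⁻¹ * (-1)^(i:ℕ)) with hc
  have hcnorm : ‖c‖ = (Real.sqrt ((n+1 : ℕ) : ℝ))⁻¹ := by
    have hfact : (((n+1).factorial : ℕ) : ℝ) = ((n+1 : ℕ) : ℝ) * ((n.factorial : ℕ) : ℝ) := by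
      rw [Nat.factorial_succ]; push_cast; ring
    have key : Real.sqrt (((n+1).factorial : ℕ) : ℝ)
        = Real.sqrt ((n+1 : ℕ) : ℝ) * Real.sqrt ((n.factorial : ℕ) : ℝ) := by
      rw [hfact, Real.sqrt_mul (by positivity)]
    rw [hc]
    simp only [norm_mul, norm_inv, norm_pow, norm_neg, norm_one, one_pow, mul_one,
      Complex.norm_real, Real.norm_eq_abs]
    rw [norm_detU hU, abs_of_nonneg (Real.sqrt_nonneg _), abs_of_nonneg (Real.sqrt_nonneg _),
      key, mul_inv]
    rw [inv_one, mul_one, ← mul_assoc, mul_comm (Real.sqrt ((n.factorial : ℕ) : ℝ))]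
    rw [mul_assoc, mul_inv_cancel₀ (ne_of_gt hfn), mul_one]
  have hdU := detU_ne_zero hU
  have h1 : ((Real.sqrt n.factorial : ℝ) : ℂ) ≠ 0 := Complex.ofReal_ne_zero.mpr (ne_of_gt hfn)
  have h2 : ((Real.sqrt (n+1).factorial : ℝ) : ℂ) ≠ 0 := Complex.ofReal_ne_zero.mpr (ne_of_gt hfn1)
  have hmain : projFirstVec hN (WithLp.toLp 2 (fun x => U x i)) (singlet (n+1)) =
      c • prodStateVec hN (WithLp.toLp 2 (fun x => U x i)) (subSingletOfBasis U i) := by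
    ext f
    have hrr : (c • prodStateVec hN (WithLp.toLp 2 (fun x => U x i)) (subSingletOfBasis U i)) f
        = c * (U (f 0) i * subSingletOfBasis U i (fun j => f j.succ)) := rfl
    rw [proj_apply hN U i f, hrr, subSingletOfBasis_apply U i, det_Qm hU, hc]
    field_simp
    rfl
  refine ⟨⟨c, hcnorm, hmain⟩, ?_⟩
  rw [hmain]
  have hβ : ∑ x : Fin (n+1), ‖U x i‖^2 = 1 := sum_norm_col hU i
  have hχ : ∑ h : Fin n → Fin (n+1), ‖subSingletOfBasis U i h‖^2 = 1 := by
    have hterm : ∀ h : Fin n → Fin (n+1), ‖subSingletOfBasis U i h‖^2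
        = ((Real.sqrt n.factorial)⁻¹)^2 * ‖(Rm U i h).det‖^2 := by
      intro h
      rw [subSingletOfBasis_apply U i, norm_mul, mul_pow, norm_inv, Complex.norm_real,
        Real.norm_eq_abs, abs_of_nonneg (Real.sqrt_nonneg _)]
    rw [Finset.sum_congr rfl fun h _ => hterm h, ← Finset.mul_sum, sum_norm_det hU i]
    rw [inv_pow, Real.sq_sqrt (by positivity)]
    have hne : ((n.factorial : ℕ) : ℝ) ≠ 0 := by positivity
    field_simp
  have hprod : ‖prodStateVec hN (WithLp.toLp 2 (fun x => U x i)) (subSingletOfBasis U i)‖^2 = 1 := by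
    rw [EuclideanSpace.norm_eq,
      Real.sq_sqrt (Finset.sum_nonneg fun f _ => sq_nonneg _)]
    have hterm : ∀ f : Fin (n+1) → Fin (n+1),
        ‖prodStateVec hN (WithLp.toLp 2 (fun x => U x i)) (subSingletOfBasis U i) f‖^2
          = ‖U (f 0) i‖^2 * ‖subSingletOfBasis U i (fun j => f j.succ)‖^2 := by
      intro f
      have : prodStateVec hN (WithLp.toLp 2 (fun x => U x i)) (subSingletOfBasis U i) f
          = U (f 0) i * subSingletOfBasis U i (fun j => f j.succ) := rfl
      rw [this, norm_mul, mul_pow]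
    rw [Finset.sum_congr rfl fun f _ => hterm f]
    rw [Fintype.sum_equiv ((Fin.consEquiv (fun _ => Fin (n+1))).symm)
      (fun f : Fin (n+1) → Fin (n+1) => ‖U (f 0) i‖^2 * ‖subSingletOfBasis U i (fun j => f j.succ)‖^2)
      (fun p : Fin (n+1) × (Fin n → Fin (n+1)) => ‖U p.1 i‖^2 * ‖subSingletOfBasis U i p.2‖^2)
      (fun f => rfl)]
    rw [Fintype.sum_prod_type]
    dsimp only
    rw [Finset.sum_congr rfl fun a _ => (Finset.mul_sum _ _ _).symm]
    rw [Finset.sum_congr rfl fun a _ => by rw [hχ]]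
    simpa using hβ
  rw [norm_smul, mul_pow, hcnorm, hprod, mul_one, inv_pow,
    Real.sq_sqrt (Nat.cast_nonneg _)]
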